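/- Posterior guilt probability with frequency uncertainty: in the uncertain-frequency island model, P(C=s | S=s, Γ_C=1, Γ_s=1) = 1/(1 + N(p + σ²/p)) = 1/(1+Np'), where p' = E[W | Γ_C=1] = (p² + σ²)/p. In particular uncertainty about the frequency (σ² > 0) strictly decreases the posterior probability of guilt relative to using p, provided N ≥ 1. -/

import Mathlib

open MeasureTheory ProbabilityTheory
open scoped ENNReal

section Aux

open Finset in
lemma island_aux_sum_pi {X : Type*} [Fintype X] [DecidableEq X] (T : Finset X)
    (w : Bool → ℝ≥0∞) (hw : w true + w false = 1) :
    ∑ f ∈ Fintype.piFinset (fun x => if x ∈ T then ({true} : Finset Bool) else Finset.univ),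
      ∏ x, w (f x) = w true ^ T.card := by
  rw [← Finset.prod_univ_sum]
  have : ∀ x : X, (∑ b ∈ (if x ∈ T then ({true} : Finset Bool) else Finset.univ), w b)
      = if x ∈ T then w true else 1 := by
    intro x
    by_cases hx : x ∈ T <;> simp [hx, ← hw, Finset.sum_ite_eq, add_comm]
  simp_rw [this]
  rw [Finset.prod_ite_mem, Finset.univ_inter, Finset.prod_const]

end Aux

/-- Posterior guilt probability with frequency uncertainty:
`P(C=s | S=s, I, E) = 1/(1 + N(p + σ²/p))`, and uncertainty (`σ² > 0`) strictly
decreases the posterior probability of guilt relative to using `p`, provided `N ≥ 1`. -/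
theorem island_uncertain_frequency_posterior
    {Ω : Type*} [MeasurableSpace Ω] (μ : Measure Ω) [IsProbabilityMeasure μ]
    {X : Type*} [Fintype X] [MeasurableSpace X] [MeasurableSingletonClass X]
    (N : ℕ) (hX : Fintype.card X = N + 1)
    (C S : Ω → X) (hC : Measurable C) (hS : Measurable S)
    (hCunif : ∀ x : X, μ {ω | C ω = x} = 1 / (N + 1))
    (hCS : IndepFun C S μ)
    (Γ : X → Ω → Bool) (hΓ : ∀ x, Measurable (Γ x))
    (W : Ω → ℝ) (hW : Measurable W)
    (χ : ℝ → ℝ) (hχ0 : ∀ t, 0 ≤ χ t) (hχsupp : ∀ t, t ∉ Set.Icc (0:ℝ) 1 → χ t = 0)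
    (hmap : μ.map W = MeasureTheory.volume.withDensity (fun t => ENNReal.ofReal (χ t)))
    (p : ℝ) (hp0 : 0 < p) (hp : ∫ t, t * χ t = p)
    (σ2 : ℝ) (hσ2 : ∫ t, (t - p) ^ 2 * χ t = σ2)
    -- `(C,S)` is independent of `(W, (Γ_x)_x)`:
    (hind : IndepFun (fun ω => (C ω, S ω)) (fun ω => (W ω, fun x => Γ x ω)) μ)
    -- conditionally on `W = t`, the `Γ_x` are i.i.d. Bernoulli(`t`):
    (hmodel : ∀ (f : X → Bool) (B : Set ℝ), MeasurableSet B →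
      μ ({ω | ∀ x, Γ x ω = f x} ∩ W ⁻¹' B)
        = ∫⁻ t in B,
            (∏ x : X, if f x then ENNReal.ofReal t else ENNReal.ofReal (1 - t))
          ∂(μ.map W))
    (s : X)
    (hpos : μ ({ω | S ω = s} ∩ {ω | Γ (C ω) ω = true} ∩ {ω | Γ s ω = true}) ≠ 0) :
    μ[|{ω | S ω = s} ∩ {ω | Γ (C ω) ω = true} ∩ {ω | Γ s ω = true}] {ω | C ω = s}
        = ENNReal.ofReal (1 / (1 + N * (p + σ2 / p))) ∧
    (0 < σ2 → 1 ≤ N →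
      μ[|{ω | S ω = s} ∩ {ω | Γ (C ω) ω = true} ∩ {ω | Γ s ω = true}] {ω | C ω = s}
        < ENNReal.ofReal (1 / (1 + N * p))) := by
  classical
  set E := {ω | S ω = s} ∩ {ω | Γ (C ω) ω = true} ∩ {ω | Γ s ω = true} with hE
  -- basic measurability
  have hmesC : ∀ x : X, MeasurableSet {ω | C ω = x} := fun x =>
    hC (measurableSet_singleton x)
  have hmesS : MeasurableSet {ω | S ω = s} := hS (measurableSet_singleton s)
  have hmesΓ : ∀ x : X, MeasurableSet {ω | Γ x ω = true} := fun x =>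
    (hΓ x) (measurableSet_singleton true)
  have hmesΓC : MeasurableSet {ω | Γ (C ω) ω = true} := by
    have : {ω | Γ (C ω) ω = true} = ⋃ x, ({ω | C ω = x} ∩ {ω | Γ x ω = true}) := by
      ext ω
      simp only [Set.mem_setOf_eq, Set.mem_iUnion, Set.mem_inter_iff]
      exact ⟨fun h => ⟨C ω, rfl, h⟩, fun ⟨x, hx, h⟩ => hx ▸ h⟩
    rw [this]
    exact MeasurableSet.iUnion fun x => (hmesC x).inter (hmesΓ x)
  have hmesE : MeasurableSet E := (hmesS.inter hmesΓC).inter (hmesΓ s)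
  -- the map measure is a probability measure supported on [0,1]
  have hmapW_prob : IsProbabilityMeasure (μ.map W) :=
    Measure.isProbabilityMeasure_map hW.aemeasurable
  -- integrability facts
  have hint1 : Integrable (fun t => t * χ t) := by
    by_contra h
    rw [integral_undef h] at hp
    exact hp0.ne hp
  have hchi_aem : AEMeasurable χ (volume : Measure ℝ) := by
    have hne : ∀ᵐ t : ℝ, t ≠ 0 := by
      refine ae_iff.2 ?_
      have : {a : ℝ | ¬a ≠ 0} = {0} := by ext a; simp
      rw [this]; exact Real.volume_singleton
    refine AEMeasurable.congr ((measurable_inv.aemeasurable).mul hint1.aemeasurable) ?_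
    filter_upwards [hne] with t ht
    exact inv_mul_cancel_left₀ ht (χ t)
  have hρ_aem : AEMeasurable (fun t => ENNReal.ofReal (χ t)) (volume : Measure ℝ) :=
    ENNReal.measurable_ofReal.comp_aemeasurable hchi_aem
  -- general moment transfer lemma
  have moment : ∀ g : ℝ → ℝ, Measurable g → Integrable (fun t => g t * χ t) →
      (∀ t, 0 ≤ g t * χ t) → (∀ t, 0 ≤ t → 0 ≤ g t) →
      ∫⁻ t, ENNReal.ofReal (g t) ∂(μ.map W) = ENNReal.ofReal (∫ t, g t * χ t) := by
    intro g hg hgint hgnn hgnn'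
    rw [hmap, lintegral_withDensity_eq_lintegral_mul_non_measurable₀ _ hρ_aem
      (Filter.Eventually.of_forall fun t => ENNReal.ofReal_lt_top)]
    rw [ofReal_integral_eq_lintegral_ofReal hgint (Filter.Eventually.of_forall hgnn)]
    refine lintegral_congr fun t => ?_
    simp only [Pi.mul_apply]
    by_cases ht : χ t = 0
    · simp [ht]
    · have htI : t ∈ Set.Icc (0:ℝ) 1 := by
        by_contra h; exact ht (hχsupp t h)
      rw [← ENNReal.ofReal_mul (hχ0 t), mul_comm]
  -- total mass of χ is 1
  have htot : ∫⁻ t, ENNReal.ofReal (χ t) ∂(volume : Measure ℝ) = 1 := by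
    have h1 : (μ.map W) Set.univ = 1 := measure_univ
    rw [hmap, withDensity_apply _ MeasurableSet.univ, Measure.restrict_univ] at h1
    exact h1
  have hchi_int : Integrable χ := by
    refine ⟨hchi_aem.aestronglyMeasurable, ?_⟩
    rw [hasFiniteIntegral_iff_ofReal (Filter.Eventually.of_forall hχ0), htot]
    exact ENNReal.one_lt_top
  have hchi_tot : ∫ t, χ t = 1 := by
    have := ofReal_integral_eq_lintegral_ofReal hchi_int (Filter.Eventually.of_forall hχ0)
    rw [htot] at this
    have h0 : 0 ≤ ∫ t, χ t := integral_nonneg hχ0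
    have h1 := ENNReal.ofReal_eq_one.mp this
    linarith
  -- second moment integrability
  have hint2 : Integrable (fun t => t ^ 2 * χ t) := by
    refine Integrable.mono hint1 (((measurable_id.pow_const 2).aemeasurable.mul
      hchi_aem).aestronglyMeasurable) ?_
    refine Filter.Eventually.of_forall fun t => ?_
    by_cases ht : χ t = 0
    · simp [ht]
    · have htI : t ∈ Set.Icc (0:ℝ) 1 := by by_contra h; exact ht (hχsupp t h)
      obtain ⟨h0, h1⟩ := htI
      rw [Real.norm_eq_abs, Real.norm_eq_abs,
        abs_of_nonneg (mul_nonneg (sq_nonneg t) (hχ0 t)),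
        abs_of_nonneg (mul_nonneg h0 (hχ0 t))]
      have : t ^ 2 ≤ t := by nlinarith
      exact mul_le_mul_of_nonneg_right this (hχ0 t)
  have hm2 : ∫ t, t ^ 2 * χ t = p ^ 2 + σ2 := by
    have hexp : (fun t : ℝ => (t - p) ^ 2 * χ t)
        = fun t => (t ^ 2 * χ t - (2 * p) * (t * χ t)) + p ^ 2 * χ t := by
      funext t; ring
    have i3 : Integrable (fun t : ℝ => t ^ 2 * χ t - 2 * p * (t * χ t)) :=
      hint2.sub (hint1.const_mul (2 * p))
    have i4 : Integrable (fun t : ℝ => p ^ 2 * χ t) := hchi_int.const_mul (p ^ 2)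
    have i5 : Integrable (fun t : ℝ => 2 * p * (t * χ t)) := hint1.const_mul (2 * p)
    rw [hexp, integral_add i3 i4, integral_sub hint2 i5, integral_const_mul, integral_const_mul,
      hp, hchi_tot] at hσ2
    linarith
  -- support of the law of W
  have hsupp : (μ.map W) (Set.Icc (0:ℝ) 1)ᶜ = 0 := by
    rw [hmap, withDensity_apply _ measurableSet_Icc.compl]
    rw [setLIntegral_congr_fun measurableSet_Icc.compl
      (show Set.EqOn (fun t => ENNReal.ofReal (χ t)) (fun _ => 0) (Set.Icc (0:ℝ) 1)ᶜ from
        fun t ht => by simp [hχsupp t ht])]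
    simp
  have haeIcc : ∀ᵐ t ∂(μ.map W), t ∈ Set.Icc (0:ℝ) 1 := by
    rw [ae_iff]
    exact hsupp
  -- the key event computation
  have key : ∀ T : Finset X, μ {ω | ∀ x ∈ T, Γ x ω = true}
      = ∫⁻ t, (ENNReal.ofReal t) ^ T.card ∂(μ.map W) := by
    intro T
    set Sf := Fintype.piFinset (fun x : X => if x ∈ T then ({true} : Finset Bool)
      else Finset.univ) with hSf
    have hdecomp : {ω | ∀ x ∈ T, Γ x ω = true}
        = ⋃ f ∈ Sf, {ω | ∀ x, Γ x ω = f x} := by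
      ext ω
      simp only [Set.mem_setOf_eq, Set.mem_iUnion]
      constructor
      · intro h
        refine ⟨fun x => Γ x ω, ?_, fun x => rfl⟩
        rw [hSf, Fintype.mem_piFinset]
        intro x
        by_cases hx : x ∈ T <;> simp [hx, h]
      · rintro ⟨f, hf, hff⟩ x hx
        rw [hSf, Fintype.mem_piFinset] at hf
        have := hf x
        rw [if_pos hx, Finset.mem_singleton] at this
        rw [hff x, this]
    rw [hdecomp, measure_biUnion_finset ?_ ?_]
    · have heach : ∀ f ∈ Sf, μ {ω | ∀ x, Γ x ω = f x}
          = ∫⁻ t, (∏ x : X, if f x then ENNReal.ofReal t else ENNReal.ofReal (1 - t))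
            ∂(μ.map W) := by
        intro f _
        have := hmodel f Set.univ MeasurableSet.univ
        simpa using this
      rw [Finset.sum_congr rfl heach, ← lintegral_finset_sum _ (fun f _ =>
        Finset.measurable_prod _ fun x _ => by
          by_cases hfx : f x = true
          · simp only [hfx, if_true]
            exact measurable_id.ennreal_ofReal
          · simp only [hfx, if_false]
            exact (measurable_const.sub measurable_id).ennreal_ofReal)]
      refine lintegral_congr_ae ?_
      filter_upwards [haeIcc] with t ht
      have hw : (fun b : Bool => if b then ENNReal.ofReal t else ENNReal.ofReal (1 - t)) true
          + (fun b : Bool => if b then ENNReal.ofReal t else ENNReal.ofReal (1 - t)) false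
            = 1 := by
        show ENNReal.ofReal t + ENNReal.ofReal (1 - t) = 1
        rw [← ENNReal.ofReal_add ht.1 (by linarith [ht.2])]
        norm_num
      have := island_aux_sum_pi T
        (fun b => if b then ENNReal.ofReal t else ENNReal.ofReal (1 - t)) hw
      simpa [hSf] using this
    · intro f hf g hg hfg
      simp only [Function.onFun, Set.disjoint_left]
      intro ω hωf hωg
      obtain ⟨x, hx⟩ := Function.ne_iff.mp hfg
      exact hx ((hωf x).symm.trans (hωg x))
    · intro f _
      have : {ω | ∀ x, Γ x ω = f x} = ⋂ x, {ω | Γ x ω = f x} := by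
        ext ω; simp
      rw [this]
      exact MeasurableSet.iInter fun x => (hΓ x) (measurableSet_singleton (f x))
  -- the two moments, after transfer
  have hmom1 : ∫⁻ t, (ENNReal.ofReal t) ^ 1 ∂(μ.map W) = ENNReal.ofReal p := by
    simp only [pow_one]
    have := moment id measurable_id hint1 (fun t => by
      by_cases ht : χ t = 0
      · simp [ht]
      · have htI : t ∈ Set.Icc (0:ℝ) 1 := by by_contra h; exact ht (hχsupp t h)
        exact mul_nonneg htI.1 (hχ0 t)) (fun t ht => ht)
    simpa [hp] using this
  have hmom2 : ∫⁻ t, (ENNReal.ofReal t) ^ 2 ∂(μ.map W) = ENNReal.ofReal (p ^ 2 + σ2) := by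
    have hmm := moment (fun t => t ^ 2) (measurable_id.pow_const 2) hint2
      (fun t => mul_nonneg (sq_nonneg t) (hχ0 t)) (fun t _ => sq_nonneg t)
    rw [hm2] at hmm
    rw [← hmm]
    refine lintegral_congr_ae ?_
    filter_upwards [haeIcc] with t ht
    rw [ENNReal.ofReal_pow ht.1]
  have hσ2nn : 0 ≤ σ2 := by
    rw [← hσ2]
    exact integral_nonneg fun t => mul_nonneg (sq_nonneg _) (hχ0 t)
  -- probability of the Γ events
  have hsingle : μ {ω | Γ s ω = true} = ENNReal.ofReal p := by
    have := key {s}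
    simp only [Finset.mem_singleton, Finset.card_singleton] at this
    rw [← hmom1, ← this]
    congr 1
    ext ω
    simp
  have hpair : ∀ x : X, x ≠ s →
      μ ({ω | Γ x ω = true} ∩ {ω | Γ s ω = true}) = ENNReal.ofReal (p ^ 2 + σ2) := by
    intro x hxs
    have := key {x, s}
    rw [Finset.card_insert_of_notMem (by simpa using hxs), Finset.card_singleton] at this
    rw [← hmom2, ← this]
    congr 1
    ext ω
    simp only [Set.mem_setOf_eq, Set.mem_inter_iff, Finset.mem_insert, Finset.mem_singleton]
    constructor
    · rintro ⟨h1, h2⟩ y (rfl | rfl) <;> assumption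
    · intro h; exact ⟨h x (Or.inl rfl), h s (Or.inr rfl)⟩
  -- independence split
  have hsplit : ∀ x : X,
      μ (({ω | C ω = x} ∩ {ω | S ω = s}) ∩ ({ω | Γ x ω = true} ∩ {ω | Γ s ω = true}))
        = (μ {ω | C ω = x} * μ {ω | S ω = s})
          * μ ({ω | Γ x ω = true} ∩ {ω | Γ s ω = true}) := by
    intro x
    have hA : MeasurableSet (({x} : Set X) ×ˢ ({s} : Set X)) :=
      (measurableSet_singleton x).prod (measurableSet_singleton s)
    have hB : MeasurableSet {q : ℝ × (X → Bool) | q.2 x = true ∧ q.2 s = true} := by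
      have hx : Measurable (fun q : ℝ × (X → Bool) => q.2 x) :=
        (measurable_pi_apply x).comp measurable_snd
      have hs' : Measurable (fun q : ℝ × (X → Bool) => q.2 s) :=
        (measurable_pi_apply s).comp measurable_snd
      exact (hx (measurableSet_singleton true)).inter (hs' (measurableSet_singleton true))
    have h := hind.measure_inter_preimage_eq_mul _ _ hA hB
    have hpre1 : (fun ω => (C ω, S ω)) ⁻¹' (({x} : Set X) ×ˢ ({s} : Set X))
        = {ω | C ω = x} ∩ {ω | S ω = s} := by
      ext ω; simp [Set.prod]
    have hpre2 : (fun ω => (W ω, fun y => Γ y ω))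
          ⁻¹' {q : ℝ × (X → Bool) | q.2 x = true ∧ q.2 s = true}
        = {ω | Γ x ω = true} ∩ {ω | Γ s ω = true} := by
      ext ω; simp
    rw [hpre1, hpre2] at h
    have h2 : μ ({ω | C ω = x} ∩ {ω | S ω = s}) = μ {ω | C ω = x} * μ {ω | S ω = s} :=
      hCS.measure_inter_preimage_eq_mul _ _ (measurableSet_singleton x)
        (measurableSet_singleton s)
    rw [h, h2]
  -- decompose E over the value of C
  have hEx : ∀ x : X, E ∩ {ω | C ω = x}
      = ({ω | C ω = x} ∩ {ω | S ω = s}) ∩ ({ω | Γ x ω = true} ∩ {ω | Γ s ω = true}) := by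
    intro x
    ext ω
    simp only [hE, Set.mem_inter_iff, Set.mem_setOf_eq]
    constructor
    · rintro ⟨⟨⟨h1, h2⟩, h3⟩, h4⟩
      exact ⟨⟨h4, h1⟩, by rw [← h4]; exact h2, h3⟩
    · rintro ⟨⟨h4, h1⟩, h2, h3⟩
      exact ⟨⟨⟨h1, by rw [h4]; exact h2⟩, h3⟩, h4⟩
  have hCount : (Finset.univ.erase s).card = N := by
    have := Finset.card_erase_of_mem (Finset.mem_univ s)
    rw [Finset.card_univ, hX] at this
    simpa using this
  set a := ENNReal.ofReal p with ha
  set b := ENNReal.ofReal (p ^ 2 + σ2) with hb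
  set c := ((N : ℝ≥0∞) + 1)⁻¹ * μ {ω | S ω = s} with hc
  have hCunif' : ∀ x : X, μ {ω | C ω = x} = ((N : ℝ≥0∞) + 1)⁻¹ := by
    intro x
    rw [hCunif x, one_div]
  have hvalx : ∀ x : X, μ (E ∩ {ω | C ω = x}) = c * (if x = s then a else b) := by
    intro x
    rw [hEx x, hsplit x, hCunif' x]
    by_cases hxs : x = s
    · subst hxs
      rw [if_pos rfl, Set.inter_self, hsingle, hc, mul_assoc]
    · rw [if_neg hxs, hpair x hxs, hc, mul_assoc]
  have hEdecomp : μ E = c * (a + N * b) := by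
    have hEu : E = ⋃ x : X, (E ∩ {ω | C ω = x}) := by
      ext ω
      simp only [Set.mem_iUnion, Set.mem_inter_iff, Set.mem_setOf_eq]
      exact ⟨fun h => ⟨C ω, h, rfl⟩, fun ⟨x, h, _⟩ => h⟩
    rw [hEu, measure_iUnion ?_ (fun x => hmesE.inter (hmesC x))]
    · rw [tsum_fintype]
      simp_rw [hvalx]
      rw [← Finset.mul_sum]
      congr 1
      rw [← Finset.add_sum_erase Finset.univ _ (Finset.mem_univ s), if_pos rfl]
      congr 1
      rw [Finset.sum_congr rfl (fun x hx => if_neg (Finset.ne_of_mem_erase hx)),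
        Finset.sum_const, hCount, nsmul_eq_mul]
    · intro x y hxy
      simp only [Function.onFun, Set.disjoint_left]
      rintro ω ⟨-, h1⟩ ⟨-, h2⟩
      exact hxy (h1.symm.trans h2)
  -- nonvanishing / finiteness facts
  have hc0 : c ≠ 0 := by
    intro h
    rw [hEdecomp, h, zero_mul] at hpos
    exact hpos rfl
  have hcT : c ≠ ⊤ := by
    refine ENNReal.mul_ne_top ?_ ?_
    · exact ENNReal.inv_ne_top.mpr (lt_of_lt_of_le zero_lt_one le_add_self).ne'
    · exact (measure_lt_top μ _).ne
  set d : ℝ≥0∞ := a + (N : ℝ≥0∞) * b with hd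
  have hd_eq : d = ENNReal.ofReal (p + N * (p ^ 2 + σ2)) := by
    rw [hd, ha, hb, ← ENNReal.ofReal_natCast N,
      ← ENNReal.ofReal_mul (Nat.cast_nonneg N),
      ← ENNReal.ofReal_add hp0.le (by positivity)]
  have hdenpos : (0:ℝ) < p + N * (p ^ 2 + σ2) := by nlinarith [Nat.cast_nonneg (α := ℝ) N]
  have hcond : μ[|E] {ω | C ω = s} = ENNReal.ofReal (1 / (1 + N * (p + σ2 / p))) := by
    rw [cond_apply hmesE μ {ω | C ω = s}, hEdecomp, hvalx s, if_pos rfl]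
    rw [show c * (a + (N : ℝ≥0∞) * b) = c * d from rfl]
    rw [ENNReal.mul_inv (Or.inl hc0) (Or.inl hcT), mul_mul_mul_comm,
      ENNReal.inv_mul_cancel hc0 hcT, one_mul, hd_eq, ha, ← ENNReal.div_eq_inv_mul,
      ← ENNReal.ofReal_div_of_pos hdenpos]
    congr 1
    have hden2 : (0:ℝ) < 1 + N * (p + σ2 / p) := by
      nlinarith [mul_nonneg (Nat.cast_nonneg (α := ℝ) N)
        (add_nonneg hp0.le (div_nonneg hσ2nn hp0.le))]
    rw [div_eq_div_iff hdenpos.ne' hden2.ne']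
    field_simp
    all_goals try ring
    all_goals exact Or.inl trivial
  refine ⟨hcond, fun hσ2pos hN => ?_⟩
  rw [hcond]
  have hN1 : (1:ℝ) ≤ (N:ℝ) := by exact_mod_cast hN
  rw [ENNReal.ofReal_lt_ofReal_iff (by positivity)]
  refine one_div_lt_one_div_of_lt (by positivity) ?_
  have : 0 < (N:ℝ) * (σ2 / p) := by positivity
  nlinarith
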